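/- Let x, y, s, t be integers such that x^2 - 1 - s^2 - s^4 = -t^2 and y^2 - 1 - t^2 - t^4 = 1 + s^2. Then (x,y,s,t) = (0, ±2, 0, ±1). -/
import Mathlib

theorem stmt_16 (x y s t : ℤ)
    (h1 : x^2 - 1 - s^2 - s^4 = -t^2) (h2 : y^2 - 1 - t^2 - t^4 = 1 + s^2) :
    x = 0 ∧ (y = 2 ∨ y = -2) ∧ s = 0 ∧ (t = 1 ∨ t = -1) := by
  have hst : t ^ 2 = s ^ 2 + 1 := by
    rcases le_or_gt (t ^ 2) (s ^ 2) with hle | hgt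
    · exfalso
      rcases eq_or_lt_of_le (sq_nonneg s) with hs0 | hs1
      · -- s = 0, hence t = 0, y^2 = 2
        have ht0 : t ^ 2 = 0 := le_antisymm (by omega) (sq_nonneg t)
        have hy2 : (y - 1) * (y + 1) = 1 := by nlinarith
        rcases Int.mul_eq_one_iff_eq_one_or_neg_one.mp hy2 with ⟨ha, hb⟩ | ⟨ha, hb⟩ <;> omega
      · -- s^2 ≥ 1 : s^4 < x^2 < (s^2+1)^2, impossible
        have h3 : s ^ 4 < x ^ 2 := by nlinarith [sq_nonneg t]
        have h4 : x ^ 2 < (s ^ 2 + 1) ^ 2 := by nlinarith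
        have habs : s ^ 2 < |x| := by
          by_contra hc
          push_neg at hc
          nlinarith [sq_abs x, abs_nonneg x]
        have : s ^ 2 + 1 ≤ |x| := habs
        nlinarith [sq_abs x]
    · -- t^2 ≥ s^2 + 1 : t^4 < y^2 ≤ (t^2+1)^2
      have h3 : t ^ 4 < y ^ 2 := by nlinarith [sq_nonneg s, sq_nonneg t]
      have h4 : y ^ 2 ≤ (t ^ 2 + 1) ^ 2 := by nlinarith
      have habs : t ^ 2 < |y| := by
        by_contra hc
        push_neg at hc
        nlinarith [sq_abs y, abs_nonneg y, sq_nonneg t]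
      have h5 : t ^ 2 + 1 ≤ |y| := habs
      have h6 : (t ^ 2 + 1) ^ 2 ≤ y ^ 2 := by nlinarith [sq_abs y]
      nlinarith
  have hs : s = 0 := by
    have habs : |s| < |t| := by
      by_contra hc
      push_neg at hc
      nlinarith [sq_abs s, sq_abs t, mul_self_le_mul_self (abs_nonneg t) hc]
    have h7 : |s| + 1 ≤ |t| := habs
    have h8 : |s| ≤ 0 := by
      nlinarith [sq_abs s, sq_abs t, mul_le_mul h7 h7 (by positivity) (abs_nonneg t)]
    exact abs_eq_zero.mp (le_antisymm h8 (abs_nonneg s))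
  subst hs
  have ht : t = 1 ∨ t = -1 := by
    have h8 : (t - 1) * (t + 1) = 0 := by nlinarith
    rcases mul_eq_zero.mp h8 with h | h
    · left; omega
    · right; omega
  have hx : x = 0 := by
    have : x ^ 2 = 0 := by nlinarith
    exact pow_eq_zero_iff (by norm_num) |>.mp this
  have hy : y = 2 ∨ y = -2 := by
    have h9 : (y - 2) * (y + 2) = 0 := by nlinarith
    rcases mul_eq_zero.mp h9 with h | h
    · left; omega
    · right; omega
  exact ⟨hx, hy, rfl, ht⟩
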